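/- arXiv:1505.00905 — 2 statements merged into one kernel-verified Lean document; each statement's English description precedes it below -/
import Mathlib

section
/- Let q>1 and σ>1 be real numbers, and let f:(0,∞)→[0,∞) be measurable. Define F(r)=∫₀^r f(t)dt. Then ∫₀^∞ r^{-σ} F(r)^q dr ≤ (q/(σ-1))^q ∫₀^∞ r^{-σ} (r f(r))^q dr. -/
open MeasureTheory Set
open scoped ENNReal

namespace HardyAux

lemma lintegral_Ioo_rpow {c : ℝ} (hc : -1 < c) {r : ℝ} (hr : 0 < r) :
    ∫⁻ t in Set.Ioo (0 : ℝ) r, ENNReal.ofReal t ^ c =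
      ENNReal.ofReal (r ^ (c + 1) / (c + 1)) := by
  have hc1 : (0 : ℝ) < c + 1 := by linarith
  have hcongr : ∫⁻ t in Set.Ioo (0 : ℝ) r, ENNReal.ofReal t ^ c
      = ∫⁻ t in Set.Ioo (0 : ℝ) r, ENNReal.ofReal (t ^ c) :=
    setLIntegral_congr_fun measurableSet_Ioo
      (fun t ht => ENNReal.ofReal_rpow_of_pos ht.1)
  have hint : IntegrableOn (fun t : ℝ => t ^ c) (Set.Ioo 0 r) := by
    have := (intervalIntegral.intervalIntegrable_rpow' (a := 0) (b := r) hc)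
    rw [intervalIntegrable_iff_integrableOn_Ioc_of_le hr.le] at this
    exact this.mono_set Set.Ioo_subset_Ioc_self
  rw [hcongr, ← ofReal_integral_eq_lintegral_ofReal hint
      ((ae_restrict_iff' measurableSet_Ioo).2
        (Filter.Eventually.of_forall fun t ht => Real.rpow_nonneg ht.1.le c))]
  congr 1
  rw [← integral_Ioc_eq_integral_Ioo, ← intervalIntegral.integral_of_le hr.le,
    integral_rpow (Or.inl hc), Real.zero_rpow hc1.ne', sub_zero]

lemma lintegral_Ioi_rpow {c : ℝ} (hc : c < -1) {t : ℝ} (ht : 0 < t) :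
    ∫⁻ r in Set.Ioi t, ENNReal.ofReal r ^ c =
      ENNReal.ofReal (t ^ (c + 1) / (-(c + 1))) := by
  have hcongr : ∫⁻ r in Set.Ioi t, ENNReal.ofReal r ^ c
      = ∫⁻ r in Set.Ioi t, ENNReal.ofReal (r ^ c) :=
    setLIntegral_congr_fun measurableSet_Ioi
      (fun r hr => ENNReal.ofReal_rpow_of_pos (ht.trans hr))
  have hint : IntegrableOn (fun r : ℝ => r ^ c) (Set.Ioi t) :=
    integrableOn_Ioi_rpow_of_lt hc ht
  rw [hcongr, ← ofReal_integral_eq_lintegral_ofReal hint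
      ((ae_restrict_iff' measurableSet_Ioi).2
        (Filter.Eventually.of_forall fun r hr => Real.rpow_nonneg (ht.trans hr).le c))]
  congr 1
  rw [integral_Ioi_rpow_of_lt hc ht, div_neg, neg_div]

lemma lintegral_swap_aux (g h : ℝ → ℝ≥0∞) (hg : Measurable g) (hh : Measurable h) :
    ∫⁻ r in Set.Ioi (0 : ℝ), h r * ∫⁻ t in Set.Ioo 0 r, g t
      = ∫⁻ t in Set.Ioi (0 : ℝ), g t * ∫⁻ r in Set.Ioi t, h r := by
  set S : Set (ℝ × ℝ) := {p : ℝ × ℝ | 0 < p.2 ∧ p.2 < p.1} with hSdef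
  have hS : MeasurableSet S :=
    (measurableSet_lt measurable_const measurable_snd).inter
      (measurableSet_lt measurable_snd measurable_fst)
  set k : ℝ × ℝ → ℝ≥0∞ := S.indicator (fun p => h p.1 * g p.2) with hkdef
  have hkm : Measurable k :=
    ((hh.comp measurable_fst).mul (hg.comp measurable_snd)).indicator hS
  have h1 : ∀ r : ℝ, h r * ∫⁻ t in Set.Ioo 0 r, g t = ∫⁻ t, k (r, t) := by
    intro r
    rw [← lintegral_const_mul _ hg, ← lintegral_indicator measurableSet_Ioo]
    refine lintegral_congr fun t => ?_
    by_cases htr : t ∈ Set.Ioo (0 : ℝ) r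
    · rw [Set.indicator_of_mem htr, hkdef,
        Set.indicator_of_mem (show (r, t) ∈ S from ⟨htr.1, htr.2⟩)]
    · rw [Set.indicator_of_notMem htr, hkdef,
        Set.indicator_of_notMem (show (r, t) ∉ S from fun hc => htr ⟨hc.1, hc.2⟩)]
  have h2 : ∀ t : ℝ, ∫⁻ r, k (r, t)
      = (Set.Ioi (0 : ℝ)).indicator (fun t => g t * ∫⁻ r in Set.Ioi t, h r) t := by
    intro t
    by_cases ht : t ∈ Set.Ioi (0 : ℝ)
    · rw [Set.indicator_of_mem ht]
      have : ∀ r : ℝ, k (r, t) = (Set.Ioi t).indicator (fun r => h r * g t) r := by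
        intro r
        by_cases hrt : r ∈ Set.Ioi t
        · rw [Set.indicator_of_mem hrt, hkdef,
            Set.indicator_of_mem (show (r, t) ∈ S from ⟨ht, hrt⟩)]
        · rw [Set.indicator_of_notMem hrt, hkdef,
            Set.indicator_of_notMem (show (r, t) ∉ S from fun hc => hrt hc.2)]
      rw [lintegral_congr this, lintegral_indicator measurableSet_Ioi,
        lintegral_mul_const _ hh, mul_comm]
    · rw [Set.indicator_of_notMem ht]
      have : ∀ r : ℝ, k (r, t) = 0 := by
        intro r
        rw [hkdef, Set.indicator_of_notMem
          (show (r, t) ∉ S from fun hc => ht hc.1)]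
      rw [lintegral_congr this, lintegral_zero]
  calc ∫⁻ r in Set.Ioi (0 : ℝ), h r * ∫⁻ t in Set.Ioo 0 r, g t
      = ∫⁻ r in Set.Ioi (0 : ℝ), ∫⁻ t, k (r, t) :=
        setLIntegral_congr_fun measurableSet_Ioi
          (fun r _ => h1 r)
    _ = ∫⁻ r, ∫⁻ t, k (r, t) := by
        rw [← lintegral_indicator measurableSet_Ioi]
        refine lintegral_congr fun r => ?_
        by_cases hr : r ∈ Set.Ioi (0 : ℝ)
        · rw [Set.indicator_of_mem hr]
        · rw [Set.indicator_of_notMem hr]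
          have : ∀ t : ℝ, k (r, t) = 0 := by
            intro t
            rw [hkdef, Set.indicator_of_notMem
              (show (r, t) ∉ S from fun hc => hr (Set.mem_Ioi.2 (hc.1.trans hc.2)))]
          rw [lintegral_congr this, lintegral_zero]
    _ = ∫⁻ t, ∫⁻ r, k (r, t) := by
        exact lintegral_lintegral_swap hkm.aemeasurable
    _ = ∫⁻ t, (Set.Ioi (0 : ℝ)).indicator (fun t => g t * ∫⁻ r in Set.Ioi t, h r) t :=
        lintegral_congr h2
    _ = ∫⁻ t in Set.Ioi (0 : ℝ), g t * ∫⁻ r in Set.Ioi t, h r :=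
        lintegral_indicator measurableSet_Ioi _

end HardyAux

/-- **1D Hardy inequality** (Hardy–Littlewood–Pólya, Thm 330), case `σ > 1`:
for `q > 1`, `σ > 1` and a measurable `f : (0,∞) → [0,∞]`, with
`F r = ∫₀^r f(t) dt`, one has
`∫₀^∞ r^{-σ} F(r)^q dr ≤ (q/(σ-1))^q ∫₀^∞ r^{-σ} (r f(r))^q dr`. -/
theorem hardy_inequality_sigma_gt_one (q σ : ℝ) (hq : 1 < q) (hσ : 1 < σ)
    (f : ℝ → ℝ≥0∞) (hf : Measurable f)
    (F : ℝ → ℝ≥0∞) (hF : ∀ r, F r = ∫⁻ t in Set.Ioo (0 : ℝ) r, f t) :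
    ∫⁻ r in Set.Ioi (0 : ℝ), (ENNReal.ofReal r) ^ (-σ) * (F r) ^ q ≤
      ENNReal.ofReal ((q / (σ - 1)) ^ q) *
        ∫⁻ r in Set.Ioi (0 : ℝ),
          (ENNReal.ofReal r) ^ (-σ) * (ENNReal.ofReal r * f r) ^ q := by
  have hq0 : (0 : ℝ) < q := lt_trans one_pos hq
  have hq1 : (0 : ℝ) < q - 1 := by linarith
  set δ : ℝ := (σ - 1) / q with hδdef
  have hδ : 0 < δ := div_pos (by linarith) hq0
  have hδq : δ * q = σ - 1 := by rw [hδdef]; field_simp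
  set a : ℝ := (1 - δ) * (q - 1) / q with hadef
  set p : ℝ := q / (q - 1) with hpdef
  have hpq : q.HolderConjugate p := Real.HolderConjugate.conjExponent hq
  have hp0 : (0 : ℝ) < p := hpq.symm.pos
  have hap : -a * p = δ - 1 := by
    rw [hadef, hpdef]; field_simp; ring
  have hqp : q / p = q - 1 := by
    rw [hpdef]; field_simp
  have haq : a * q - δ = q - σ := by
    have : a * q = (1 - δ) * (q - 1) := by rw [hadef]; field_simp
    nlinarith [hδq]
  have hexp : -σ + δ * (q - 1) = -δ - 1 := by nlinarith [hδq]
  set D : ℝ≥0∞ := ENNReal.ofReal δ⁻¹ with hDdef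
  have hD0 : D ≠ 0 := (ENNReal.ofReal_pos.2 (inv_pos.2 hδ)).ne'
  have hDt : D ≠ ⊤ := ENNReal.ofReal_ne_top
  set G : ℝ → ℝ≥0∞ := fun t => (f t * ENNReal.ofReal t ^ a) ^ q with hGdef
  have hGm : Measurable G := by
    apply Measurable.pow_const
    exact hf.mul (ENNReal.measurable_ofReal.pow_const a)
  -- pointwise (Hölder) bound
  have key : ∀ r ∈ Set.Ioi (0 : ℝ),
      (ENNReal.ofReal r) ^ (-σ) * (F r) ^ q ≤
        D ^ (q - 1) * ((ENNReal.ofReal r) ^ (-δ - 1) * ∫⁻ t in Set.Ioo (0 : ℝ) r, G t) := by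
    intro r hr
    rw [Set.mem_Ioi] at hr
    set R : ℝ≥0∞ := ENNReal.ofReal r with hRdef
    have hR0 : R ≠ 0 := (ENNReal.ofReal_pos.2 hr).ne'
    have hRt : R ≠ ⊤ := ENNReal.ofReal_ne_top
    -- rewrite F r as a product for Hölder
    have hF' : F r = ∫⁻ t in Set.Ioo (0 : ℝ) r,
        ((fun t => f t * ENNReal.ofReal t ^ a) * fun t => ENNReal.ofReal t ^ (-a)) t := by
      rw [hF r]
      refine setLIntegral_congr_fun measurableSet_Ioo
        (fun t ht => ?_)
      have ht0 : ENNReal.ofReal t ≠ 0 := by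
        simp [ENNReal.ofReal_eq_zero, not_le, ht.1]
      simp only [Pi.mul_apply]
      rw [mul_assoc, ← ENNReal.rpow_add _ _ ht0 ENNReal.ofReal_ne_top]
      simp
    have hHolder : F r ≤ (∫⁻ t in Set.Ioo (0 : ℝ) r, G t) ^ (1 / q) *
        (∫⁻ t in Set.Ioo (0 : ℝ) r, (ENNReal.ofReal t ^ (-a)) ^ p) ^ (1 / p) := by
      rw [hF']
      exact ENNReal.lintegral_mul_le_Lp_mul_Lq _ hpq
        ((hf.mul (ENNReal.measurable_ofReal.pow_const a)).aemeasurable)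
        ((ENNReal.measurable_ofReal.pow_const (-a)).aemeasurable)
    -- compute the second factor
    have hsecond : ∫⁻ t in Set.Ioo (0 : ℝ) r, (ENNReal.ofReal t ^ (-a)) ^ p
        = R ^ δ * D := by
      have e1 : ∫⁻ t in Set.Ioo (0 : ℝ) r, (ENNReal.ofReal t ^ (-a)) ^ p
          = ∫⁻ t in Set.Ioo (0 : ℝ) r, ENNReal.ofReal t ^ (δ - 1) := by
        refine setLIntegral_congr_fun measurableSet_Ioo
          (fun t ht => ?_)
        rw [← ENNReal.rpow_mul, hap]
      rw [e1, HardyAux.lintegral_Ioo_rpow (by linarith) hr, sub_add_cancel,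
        div_eq_mul_inv, ENNReal.ofReal_mul (Real.rpow_nonneg hr.le δ),
        ENNReal.ofReal_rpow_of_pos hr]
    calc R ^ (-σ) * (F r) ^ q
        ≤ R ^ (-σ) * (((∫⁻ t in Set.Ioo (0 : ℝ) r, G t) ^ (1 / q) *
            (R ^ δ * D) ^ (1 / p)) ^ q) := by
          gcongr
          rw [← hsecond]
          exact hHolder
      _ = R ^ (-σ) * ((∫⁻ t in Set.Ioo (0 : ℝ) r, G t) *
            (R ^ δ * D) ^ (q - 1)) := by
          rw [ENNReal.mul_rpow_of_nonneg _ _ hq0.le, ← ENNReal.rpow_mul,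
            ← ENNReal.rpow_mul, one_div_mul_cancel hq0.ne', ENNReal.rpow_one,
            one_div, inv_mul_eq_div, hqp]
      _ = D ^ (q - 1) * (R ^ (-δ - 1) * ∫⁻ t in Set.Ioo (0 : ℝ) r, G t) := by
          rw [ENNReal.mul_rpow_of_nonneg _ _ hq1.le, ← ENNReal.rpow_mul]
          have : R ^ (-σ) * R ^ (δ * (q - 1)) = R ^ (-δ - 1) := by
            rw [← ENNReal.rpow_add _ _ hR0 hRt, hexp]
          calc R ^ (-σ) * ((∫⁻ t in Set.Ioo (0 : ℝ) r, G t) *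
                (R ^ (δ * (q - 1)) * D ^ (q - 1)))
              = D ^ (q - 1) * ((R ^ (-σ) * R ^ (δ * (q - 1))) *
                  ∫⁻ t in Set.Ioo (0 : ℝ) r, G t) := by ring
            _ = D ^ (q - 1) * (R ^ (-δ - 1) * ∫⁻ t in Set.Ioo (0 : ℝ) r, G t) := by
                rw [this]
  have hDq1t : D ^ (q - 1) ≠ ⊤ := ENNReal.rpow_ne_top_of_nonneg hq1.le hDt
  calc ∫⁻ r in Set.Ioi (0 : ℝ), (ENNReal.ofReal r) ^ (-σ) * (F r) ^ q
      ≤ ∫⁻ r in Set.Ioi (0 : ℝ),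
          D ^ (q - 1) * ((ENNReal.ofReal r) ^ (-δ - 1) * ∫⁻ t in Set.Ioo (0 : ℝ) r, G t) :=
        setLIntegral_mono' measurableSet_Ioi key
    _ = D ^ (q - 1) * ∫⁻ r in Set.Ioi (0 : ℝ),
          (ENNReal.ofReal r) ^ (-δ - 1) * ∫⁻ t in Set.Ioo (0 : ℝ) r, G t :=
        lintegral_const_mul' _ _ hDq1t
    _ = D ^ (q - 1) * ∫⁻ t in Set.Ioi (0 : ℝ),
          G t * ∫⁻ r in Set.Ioi t, (ENNReal.ofReal r) ^ (-δ - 1) := by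
        rw [HardyAux.lintegral_swap_aux G _ hGm
          (ENNReal.measurable_ofReal.pow_const (-δ - 1))]
    _ = D ^ (q - 1) * ∫⁻ t in Set.Ioi (0 : ℝ),
          D * ((ENNReal.ofReal t) ^ (-σ) * (ENNReal.ofReal t * f t) ^ q) := by
        congr 1
        refine setLIntegral_congr_fun measurableSet_Ioi
          (fun t ht => ?_)
        rw [Set.mem_Ioi] at ht
        set T : ℝ≥0∞ := ENNReal.ofReal t with hTdef
        have hT0 : T ≠ 0 := (ENNReal.ofReal_pos.2 ht).ne'
        have hTt : T ≠ ⊤ := ENNReal.ofReal_ne_top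
        have e1 : ∫⁻ r in Set.Ioi t, (ENNReal.ofReal r) ^ (-δ - 1) = T ^ (-δ) * D := by
          rw [HardyAux.lintegral_Ioi_rpow (by linarith) ht]
          have : -δ - 1 + 1 = -δ := by ring
          rw [this, neg_neg, div_eq_mul_inv,
            ENNReal.ofReal_mul (Real.rpow_nonneg ht.le _),
            ENNReal.ofReal_rpow_of_pos ht]
        rw [e1]
        show (f t * T ^ a) ^ q * (T ^ (-δ) * D) = D * (T ^ (-σ) * (T * f t) ^ q)
        have e2 : (f t * T ^ a) ^ q = f t ^ q * T ^ (a * q) := by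
          rw [ENNReal.mul_rpow_of_nonneg _ _ hq0.le, ← ENNReal.rpow_mul]
        have e3 : (T * f t) ^ q = T ^ q * f t ^ q :=
          ENNReal.mul_rpow_of_nonneg _ _ hq0.le
        rw [e2, e3]
        calc f t ^ q * T ^ (a * q) * (T ^ (-δ) * D)
            = D * (f t ^ q * (T ^ (a * q) * T ^ (-δ))) := by ring
          _ = D * (f t ^ q * T ^ (q - σ)) := by
              rw [← ENNReal.rpow_add _ _ hT0 hTt,
                show a * q + -δ = q - σ by linarith [haq]]
          _ = D * (f t ^ q * (T ^ (-σ) * T ^ q)) := by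
              rw [← ENNReal.rpow_add _ _ hT0 hTt,
                show -σ + q = q - σ by ring]
          _ = D * (T ^ (-σ) * (T ^ q * f t ^ q)) := by ring
    _ = D ^ (q - 1) * (D * ∫⁻ t in Set.Ioi (0 : ℝ),
          (ENNReal.ofReal t) ^ (-σ) * (ENNReal.ofReal t * f t) ^ q) :=
        congrArg _ (lintegral_const_mul' _ _ hDt)
    _ = ENNReal.ofReal ((q / (σ - 1)) ^ q) *
          ∫⁻ r in Set.Ioi (0 : ℝ),
            (ENNReal.ofReal r) ^ (-σ) * (ENNReal.ofReal r * f r) ^ q := by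
        rw [← mul_assoc]
        congr 1
        have : D ^ (q - 1) * D = D ^ q := by
          nth_rewrite 2 [← ENNReal.rpow_one D]
          rw [← ENNReal.rpow_add _ _ hD0 hDt, sub_add_cancel]
        rw [this, hDdef, ENNReal.ofReal_rpow_of_pos (inv_pos.2 hδ)]
        congr 2
        rw [hδdef, inv_div]
end

section
/- Let u^θ(r,x₃) and ω³(r,x₃) be smooth functions on (0,∞)×ℝ vanishing appropriately at r=0 and r=∞, related by ω³ = ∂_r u^θ + u^θ/r, i.e. r u^θ(r,x₃) = ∫₀^r s ω³(s,x₃) ds. Then for every q>1 there is a constant C(q) such that for each fixed x₃, ∫₀^∞ (u^θ/r)^q r dr ≤ C(q)^q ∫₀^∞ |ω³|^q r dr, and hence ‖u^θ/r‖_{L^q(ℝ³)} ≤ C(q) ‖ω³‖_{L^q(ℝ³)} for axisymmetric functions. -/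
open MeasureTheory Set
open scoped ENNReal

private lemma lint_rpow_Ioi {q : ℝ} (hq : 1 < q) {s : ℝ} (hs : 0 < s) :
    ∫⁻ r in Set.Ioi s, ENNReal.ofReal (r ^ (-q)) =
      ENNReal.ofReal (s ^ (1 - q) / (q - 1)) := by
  rw [← MeasureTheory.ofReal_integral_eq_lintegral_ofReal
      (integrableOn_Ioi_rpow_of_lt (by linarith) hs)
      (((ae_restrict_mem measurableSet_Ioi).mono fun r hr =>
        Real.rpow_nonneg (hs.trans hr).le _))]
  rw [integral_Ioi_rpow_of_lt (by linarith) hs]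
  congr 1
  rw [show -q + 1 = 1 - q from by ring, show (1 : ℝ) - q = -(q - 1) from by ring,
    neg_div_neg_eq]

/-- **Hardy inequality relating `u^θ/r` to `ω³`**: if the smooth functions
`u^θ(r,x₃)` and `ω³(r,x₃)` are related by `r u^θ(r,x₃) = ∫₀^r s ω³(s,x₃) ds`
(equivalently `ω³ = ∂_r u^θ + u^θ/r`), then for every `q > 1` there is `C(q)`
such that for each fixed `x₃`,
`∫₀^∞ |u^θ/r|^q r dr ≤ C(q)^q ∫₀^∞ |ω³|^q r dr`, and hence
`‖u^θ/r‖_{L^q(ℝ³)} ≤ C(q) ‖ω³‖_{L^q(ℝ³)}` for axisymmetric functions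
(whose `L^q(ℝ³)` norm is `(2π ∫_ℝ ∫₀^∞ |·|^q r dr dx₃)^{1/q}`). -/
theorem angular_velocity_hardy (q : ℝ) (hq : 1 < q) :
    ∃ C > 0, ∀ uθ ω3 : ℝ → ℝ → ℝ,
      Continuous (fun p : ℝ × ℝ => uθ p.1 p.2) →
      Continuous (fun p : ℝ × ℝ => ω3 p.1 p.2) →
      (∀ x₃ : ℝ, ∀ r > 0, r * uθ x₃ r = ∫ s in Set.Ioo 0 r, s * ω3 x₃ s) →
      ((∀ x₃ : ℝ,
          ∫⁻ r in Set.Ioi (0 : ℝ), ENNReal.ofReal (|uθ x₃ r / r| ^ q * r) ≤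
            ENNReal.ofReal C ^ q *
              ∫⁻ r in Set.Ioi (0 : ℝ), ENNReal.ofReal (|ω3 x₃ r| ^ q * r)) ∧
        ∫⁻ x₃ : ℝ, ∫⁻ r in Set.Ioi (0 : ℝ),
            ENNReal.ofReal (|uθ x₃ r / r| ^ q * r) ≤
          ENNReal.ofReal C ^ q *
            ∫⁻ x₃ : ℝ, ∫⁻ r in Set.Ioi (0 : ℝ),
              ENNReal.ofReal (|ω3 x₃ r| ^ q * r)) := by
  have hq0 : (0 : ℝ) < q := lt_trans zero_lt_one hq
  refine ⟨max 1 (1 / (q - 1)), lt_of_lt_of_le zero_lt_one (le_max_left _ _), ?_⟩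
  set C : ℝ := max 1 (1 / (q - 1)) with hC
  intro uθ ω3 huc hωc huω
  have hKle : ENNReal.ofReal (1 / (q - 1)) ≤ ENNReal.ofReal C ^ q := by
    calc ENNReal.ofReal (1 / (q - 1)) ≤ ENNReal.ofReal C :=
          ENNReal.ofReal_le_ofReal (le_max_right _ _)
      _ = ENNReal.ofReal C ^ (1 : ℝ) := (ENNReal.rpow_one _).symm
      _ ≤ ENNReal.ofReal C ^ q :=
          ENNReal.rpow_le_rpow_of_exponent_le
            (ENNReal.one_le_ofReal.mpr (le_max_left _ _)) hq.le
  have hmain : ∀ x₃ : ℝ,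
      ∫⁻ r in Set.Ioi (0 : ℝ), ENNReal.ofReal (|uθ x₃ r / r| ^ q * r) ≤
        ENNReal.ofReal C ^ q *
          ∫⁻ r in Set.Ioi (0 : ℝ), ENNReal.ofReal (|ω3 x₃ r| ^ q * r) := by
    intro x₃
    set g : ℝ → ℝ≥0∞ := fun s => ENNReal.ofReal (|s * ω3 x₃ s| ^ q) with hgdef
    have hωc' : Continuous fun s : ℝ => ω3 x₃ s := by
      have := hωc.comp (Continuous.prodMk_right x₃)
      exact this
    have hgc : Continuous g :=
      ENNReal.continuous_ofReal.comp
        ((Real.continuous_rpow_const hq0.le).comp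
          (continuous_abs.comp (continuous_id.mul hωc')))
    have hg : Measurable g := hgc.measurable
    set J : ℝ → ℝ≥0∞ := fun r => ∫⁻ s in Set.Ioo 0 r, g s with hJdef
    set E : ℝ → ℝ≥0∞ := fun r => ENNReal.ofReal (Real.exp (Real.log r * -q)) with hEdef
    have hE : ∀ r : ℝ, 0 < r → E r = ENNReal.ofReal (r ^ (-q)) := by
      intro r hr
      rw [hEdef, Real.rpow_def_of_pos hr]
    -- pointwise Hölder bound
    have hpt : ∀ r : ℝ, ENNReal.ofReal (|uθ x₃ r / r| ^ q * r) ≤ E r * J r := by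
      intro r
      rcases le_or_gt r 0 with hr | hr
      · have h0 : |uθ x₃ r / r| ^ q * r ≤ 0 :=
          mul_nonpos_of_nonneg_of_nonpos (Real.rpow_nonneg (abs_nonneg _) _) hr
        rw [ENNReal.ofReal_eq_zero.mpr h0]
        exact zero_le
      · set q' : ℝ := Real.conjExponent q with hq'def
        have hq' : q.HolderConjugate q' := Real.HolderConjugate.conjExponent hq
        set F : ℝ := r * uθ x₃ r with hFdef
        have hF : F = ∫ s in Set.Ioo 0 r, s * ω3 x₃ s := huω x₃ r hr
        -- identity for the integrand
        have h2 : r ^ (-2 : ℝ) = (r * r)⁻¹ := by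
          rw [Real.rpow_neg hr.le]
          congr 1
          rw [show (2 : ℝ) = ((2 : ℕ) : ℝ) from by norm_num, Real.rpow_natCast]
          ring
        have hdiv : uθ x₃ r / r = F * r ^ (-2 : ℝ) := by
          rw [h2, hFdef]
          field_simp
        have hId : |uθ x₃ r / r| ^ q * r = |F| ^ q * r ^ (1 - 2 * q) := by
          rw [hdiv, abs_mul, abs_of_nonneg (Real.rpow_nonneg hr.le _),
            Real.mul_rpow (abs_nonneg _) (Real.rpow_nonneg hr.le _),
            ← Real.rpow_mul hr.le, mul_assoc]
          congr 1
          rw [show (1 : ℝ) - 2 * q = -2 * q + 1 from by ring, Real.rpow_add hr,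
            Real.rpow_one]
        -- |F| bounded by the lintegral of |f|
        have hFle : ENNReal.ofReal |F| ≤
            ∫⁻ s in Set.Ioo 0 r, ENNReal.ofReal |s * ω3 x₃ s| := by
          refine ENNReal.ofReal_le_of_le_toReal ?_
          rw [hF]
          have h := MeasureTheory.norm_integral_le_lintegral_norm
            (μ := volume.restrict (Set.Ioo 0 r)) (fun s => s * ω3 x₃ s)
          simp only [Real.norm_eq_abs] at h
          exact h
        -- Hölder inequality
        have hHolder : (∫⁻ s in Set.Ioo 0 r, ENNReal.ofReal |s * ω3 x₃ s|) ≤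
            (J r) ^ (1 / q) * (ENNReal.ofReal r) ^ (1 / q') := by
          have hmeas : AEMeasurable (fun s => ENNReal.ofReal |s * ω3 x₃ s|)
              (volume.restrict (Set.Ioo 0 r)) :=
            (ENNReal.continuous_ofReal.comp
              (continuous_abs.comp (continuous_id.mul hωc'))).measurable.aemeasurable
          have := ENNReal.lintegral_mul_le_Lp_mul_Lq
            (volume.restrict (Set.Ioo 0 r)) hq' hmeas
            (aemeasurable_const (b := (1 : ℝ≥0∞)))
          simp only [Pi.mul_apply, mul_one, ENNReal.one_rpow] at this
          have hgeq : (∫⁻ a in Set.Ioo 0 r, ENNReal.ofReal |a * ω3 x₃ a| ^ q) = J r := by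
            rw [hJdef]
            exact lintegral_congr fun a =>
              ENNReal.ofReal_rpow_of_nonneg (abs_nonneg _) hq0.le
          have hvol : (∫⁻ _ in Set.Ioo (0 : ℝ) r, (1 : ℝ≥0∞)) = ENNReal.ofReal r := by
            rw [MeasureTheory.setLIntegral_one, Real.volume_Ioo, sub_zero]
          rw [← hgeq, ← hvol]
          exact this
        have hq'q : 1 / q' * q = q - 1 := by
          rw [hq'def, Real.conjExponent]
          field_simp
        -- raise to the power q
        have hFq : ENNReal.ofReal (|F| ^ q) ≤ J r * ENNReal.ofReal (r ^ (q - 1)) := by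
          have h := ENNReal.rpow_le_rpow (hFle.trans hHolder) hq0.le
          rw [← ENNReal.ofReal_rpow_of_nonneg (abs_nonneg _) hq0.le]
          refine h.trans (le_of_eq ?_)
          rw [ENNReal.mul_rpow_of_nonneg _ _ hq0.le, ← ENNReal.rpow_mul,
            ← ENNReal.rpow_mul, one_div_mul_cancel hq0.ne', ENNReal.rpow_one, hq'q,
            ENNReal.ofReal_rpow_of_nonneg hr.le (by linarith)]
        calc ENNReal.ofReal (|uθ x₃ r / r| ^ q * r)
            = ENNReal.ofReal (|F| ^ q) * ENNReal.ofReal (r ^ (1 - 2 * q)) := by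
              rw [hId, ENNReal.ofReal_mul (Real.rpow_nonneg (abs_nonneg _) _)]
          _ ≤ J r * ENNReal.ofReal (r ^ (q - 1)) * ENNReal.ofReal (r ^ (1 - 2 * q)) :=
              mul_le_mul_left hFq _
          _ = E r * J r := by
              rw [mul_assoc, ← ENNReal.ofReal_mul (Real.rpow_nonneg hr.le _),
                ← Real.rpow_add hr, show q - 1 + (1 - 2 * q) = -q from by ring,
                hE r hr, mul_comm]
    -- Tonelli setup
    set A : Set (ℝ × ℝ) := {p | 0 < p.2 ∧ p.2 < p.1} with hAdef
    have hA : MeasurableSet A :=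
      (measurableSet_lt measurable_const measurable_snd).inter
        (measurableSet_lt measurable_snd measurable_fst)
    set ψ : ℝ × ℝ → ℝ≥0∞ := fun p => E p.1 * g p.2 with hψdef
    have hψ : Measurable ψ :=
      ((Real.measurable_exp.comp
        ((Real.measurable_log.comp measurable_fst).mul measurable_const)).ennreal_ofReal).mul
        (hg.comp measurable_snd)
    set Φ : ℝ × ℝ → ℝ≥0∞ := A.indicator ψ with hΦdef
    have hΦ : Measurable Φ := hψ.indicator hA
    have h1 : ∀ r : ℝ, (∫⁻ s, Φ (r, s)) = E r * J r := by
      intro r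
      have heq : (fun s => Φ (r, s)) = (Set.Ioo 0 r).indicator (fun s => E r * g s) := by
        funext s
        by_cases hs : s ∈ Set.Ioo 0 r
        · rw [Set.indicator_of_mem hs]
          exact Set.indicator_of_mem (show (r, s) ∈ A from ⟨hs.1, hs.2⟩) ψ
        · rw [Set.indicator_of_notMem hs]
          exact Set.indicator_of_notMem
            (fun h => hs ⟨h.1, h.2⟩) ψ
      rw [heq, lintegral_indicator measurableSet_Ioo,
        lintegral_const_mul' _ _ ENNReal.ofReal_ne_top]
    have hL1 : (∫⁻ r in Set.Ioi (0 : ℝ), E r * J r) = ∫⁻ r, ∫⁻ s, Φ (r, s) := by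
      rw [← lintegral_indicator measurableSet_Ioi]
      congr 1
      funext r
      by_cases hr : r ∈ Set.Ioi (0 : ℝ)
      · rw [Set.indicator_of_mem hr, h1]
      · rw [Set.indicator_of_notMem hr, h1]
        have : Set.Ioo (0 : ℝ) r = ∅ :=
          Set.Ioo_eq_empty (by simpa [Set.mem_Ioi] using hr)
        rw [hJdef]
        simp [this]
    have hswap : (∫⁻ r, ∫⁻ s, Φ (r, s)) = ∫⁻ s, ∫⁻ r, Φ (r, s) :=
      lintegral_lintegral_swap hΦ.aemeasurable
    have h2 : ∀ s : ℝ, (∫⁻ r, Φ (r, s)) =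
        (Set.Ioi (0 : ℝ)).indicator
          (fun s => ENNReal.ofReal (s ^ (1 - q) / (q - 1)) * g s) s := by
      intro s
      by_cases hs : 0 < s
      · have heq : (fun r => Φ (r, s)) = (Set.Ioi s).indicator (fun r => E r * g s) := by
          funext r
          by_cases hr : r ∈ Set.Ioi s
          · rw [Set.indicator_of_mem hr]
            exact Set.indicator_of_mem (show (r, s) ∈ A from ⟨hs, hr⟩) ψ
          · rw [Set.indicator_of_notMem hr]
            exact Set.indicator_of_notMem (fun h => hr h.2) ψ
        rw [heq, lintegral_indicator measurableSet_Ioi,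
          lintegral_mul_const' _ _ ENNReal.ofReal_ne_top,
          Set.indicator_of_mem (show s ∈ Set.Ioi (0 : ℝ) from hs)]
        congr 1
        rw [show (∫⁻ r in Set.Ioi s, E r) = ∫⁻ r in Set.Ioi s, ENNReal.ofReal (r ^ (-q))
          from setLIntegral_congr_fun measurableSet_Ioi
            (fun r hr => hE r (hs.trans hr))]
        exact lint_rpow_Ioi hq hs
      · have hz : ∀ r : ℝ, Φ (r, s) = 0 := fun r =>
          Set.indicator_of_notMem (fun h => hs h.1) ψ
        rw [Set.indicator_of_notMem (by simpa [Set.mem_Ioi] using hs)]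
        simp [hz]
    have h4 : (∫⁻ s in Set.Ioi (0 : ℝ),
          ENNReal.ofReal (s ^ (1 - q) / (q - 1)) * g s) =
        ENNReal.ofReal (1 / (q - 1)) *
          ∫⁻ s in Set.Ioi (0 : ℝ), ENNReal.ofReal (|ω3 x₃ s| ^ q * s) := by
      rw [← lintegral_const_mul' _ _ ENNReal.ofReal_ne_top]
      refine setLIntegral_congr_fun measurableSet_Ioi
        (fun s hs => ?_)
      have hs' : (0 : ℝ) < s := hs
      rw [hgdef]
      rw [← ENNReal.ofReal_mul
          (div_nonneg (Real.rpow_nonneg hs'.le _) (by linarith)),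
        ← ENNReal.ofReal_mul (one_div_nonneg.mpr (by linarith))]
      congr 1
      rw [abs_mul, abs_of_pos hs', Real.mul_rpow hs'.le (abs_nonneg _)]
      have hss : s ^ (1 - q) * s ^ q = s := by
        rw [← Real.rpow_add hs']
        norm_num
      calc s ^ (1 - q) / (q - 1) * (s ^ q * |ω3 x₃ s| ^ q)
          = s ^ (1 - q) * s ^ q * |ω3 x₃ s| ^ q / (q - 1) := by ring
        _ = 1 / (q - 1) * (|ω3 x₃ s| ^ q * s) := by rw [hss]; ring
    calc ∫⁻ r in Set.Ioi (0 : ℝ), ENNReal.ofReal (|uθ x₃ r / r| ^ q * r)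
        ≤ ∫⁻ r in Set.Ioi (0 : ℝ), E r * J r := lintegral_mono fun r => hpt r
      _ = ∫⁻ s, ∫⁻ r, Φ (r, s) := by rw [hL1, hswap]
      _ = ∫⁻ s in Set.Ioi (0 : ℝ),
            ENNReal.ofReal (s ^ (1 - q) / (q - 1)) * g s := by
          rw [← lintegral_indicator measurableSet_Ioi]
          exact lintegral_congr h2
      _ = ENNReal.ofReal (1 / (q - 1)) *
            ∫⁻ s in Set.Ioi (0 : ℝ), ENNReal.ofReal (|ω3 x₃ s| ^ q * s) := h4
      _ ≤ ENNReal.ofReal C ^ q *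
            ∫⁻ s in Set.Ioi (0 : ℝ), ENNReal.ofReal (|ω3 x₃ s| ^ q * s) :=
          mul_le_mul_left hKle _
  refine ⟨hmain, ?_⟩
  calc ∫⁻ x₃ : ℝ, ∫⁻ r in Set.Ioi (0 : ℝ), ENNReal.ofReal (|uθ x₃ r / r| ^ q * r)
      ≤ ∫⁻ x₃ : ℝ, ENNReal.ofReal C ^ q *
          ∫⁻ r in Set.Ioi (0 : ℝ), ENNReal.ofReal (|ω3 x₃ r| ^ q * r) :=
        lintegral_mono fun x₃ => hmain x₃
    _ = ENNReal.ofReal C ^ q *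
          ∫⁻ x₃ : ℝ, ∫⁻ r in Set.Ioi (0 : ℝ), ENNReal.ofReal (|ω3 x₃ r| ^ q * r) :=
        lintegral_const_mul' _ _
          (ENNReal.rpow_ne_top_of_nonneg hq0.le ENNReal.ofReal_ne_top)
end
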